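/- Let π and π' be two stationary policies on a finite Markov decision process such that for every state s the total variation distance between the action distributions π'(·|s) and π(·|s) is at most ε. Then for every bounded function f : S → ℝ and every time step t, E_{s ~ p_{π'}(s_t)}[f(s)] ≥ E_{s ~ p_π(s_t)}[f(s)] − 2εt · max_{s∈S} |f(s)|, where p_π(s_t) denotes the time-t state marginal induced by π from a common initial distribution. -/

import Mathlib

open scoped BigOperators

noncomputable section

/-- A probability distribution on a finite type, given as a nonnegative
function summing to one. -/
def IsDist {X : Type*} [Fintype X] (d : X → ℝ) : Prop :=
  (∀ x, 0 ≤ d x) ∧ ∑ x, d x = 1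

/-- A transition kernel: for each state-action pair, a distribution on states. -/
def IsKernel {S A : Type*} [Fintype S] (P : S → A → S → ℝ) : Prop :=
  ∀ s a, IsDist (P s a)

/-- A (stationary) stochastic policy: for each state, a distribution on actions. -/
def IsPolicy {S A : Type*} [Fintype A] (π : S → A → ℝ) : Prop :=
  ∀ s, IsDist (π s)

/-- The state-action distribution at time `t` of the trajectory generated by
policy `π` in the MDP with transition kernel `P`, started from the initial
state-action distribution `d0`. -/
def saDist {S A : Type*} [Fintype S] [Fintype A]
    (P : S → A → S → ℝ) (π : S → A → ℝ) (d0 : S × A → ℝ) : ℕ → S × A → ℝ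
  | 0 => d0
  | t + 1 => fun q => ∑ p : S × A, saDist P π d0 t p * P p.1 p.2 q.1 * π q.1 q.2

/-- The state-action value function `Q^π(s,a)`:
expected discounted return starting at state `s`, taking action `a` first and
following `π` afterwards. -/
def Qval {S A : Type*} [Fintype S] [Fintype A] [DecidableEq S] [DecidableEq A]
    (P : S → A → S → ℝ) (r : S → A → ℝ) (γ : ℝ) (π : S → A → ℝ) (s : S) (a : A) : ℝ :=
  ∑' t : ℕ, γ ^ t *
    ∑ q : S × A, saDist P π (fun p => if p = (s, a) then 1 else 0) t q * r q.1 q.2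

/-- The state value function `V^π(s)`. -/
def Vval {S A : Type*} [Fintype S] [Fintype A] [DecidableEq S] [DecidableEq A]
    (P : S → A → S → ℝ) (r : S → A → ℝ) (γ : ℝ) (π : S → A → ℝ) (s : S) : ℝ :=
  ∑ a : A, π s a * Qval P r γ π s a

/-- The advantage function `A^π(s,a) = Q^π(s,a) − V^π(s)`. -/
def Adv {S A : Type*} [Fintype S] [Fintype A] [DecidableEq S] [DecidableEq A]
    (P : S → A → S → ℝ) (r : S → A → ℝ) (γ : ℝ) (π : S → A → ℝ) (s : S) (a : A) : ℝ :=
  Qval P r γ π s a - Vval P r γ π s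

/-- Transition kernel of the augmented MDP whose states are pairs
`(state, previously executed action)` : `((s,a'),a) ↦ (s',a)` with `s' ~ P(·|s,a)`. -/
def augP {S A : Type*} [DecidableEq A] (P : S → A → S → ℝ) :
    S × A → A → S × A → ℝ :=
  fun x a y => if y.2 = a then P x.1 a y.1 else 0

/-- Reward of the augmented MDP: `r((s,a'),a) = r(s,a)`. -/
def augR {S A : Type*} (r : S → A → ℝ) : S × A → A → ℝ :=
  fun x a => r x.1 a

/-- A policy on the base MDP viewed as a policy on the augmented MDP. -/
def liftPolicy {S A : Type*} (π : S → A → ℝ) : S × A → A → ℝ :=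
  fun x a => π x.1 a

/-- The mixed (PIC-augmented) policy
`π(·|s,a') = μ(s,a')·δ_{a'} + (1−μ(s,a'))·π^core(·|s)`,
a stationary policy on the augmented MDP. -/
def mixed {S A : Type*} [DecidableEq A] (μ : S → A → ℝ) (πc : S → A → ℝ) :
    S × A → A → ℝ :=
  fun x a => μ x.1 x.2 * (if a = x.2 then 1 else 0) + (1 - μ x.1 x.2) * πc x.1 a


/-- The time-`t` state marginal of the trajectory distribution induced by
policy `π` from the initial state distribution `ρ0`. -/
def stateDist {S A : Type*} [Fintype S] [Fintype A]
    (P : S → A → S → ℝ) (π : S → A → ℝ) (ρ0 : S → ℝ) : ℕ → S → ℝ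
  | 0 => ρ0
  | t + 1 => fun s' => ∑ s : S, ∑ a : A, stateDist P π ρ0 t s * π s a * P s a s'

lemma stateDist_isDist {S A : Type*} [Fintype S] [Fintype A]
    (P : S → A → S → ℝ) (hP : IsKernel P)
    (ρ0 : S → ℝ) (hρ0 : IsDist ρ0)
    (π : S → A → ℝ) (hπ : IsPolicy π) :
    ∀ t, IsDist (stateDist P π ρ0 t) := by
  intro t
  induction t with
  | zero => exact hρ0
  | succ t ih =>
    constructor
    · intro s'
      apply Finset.sum_nonneg; intro s _
      apply Finset.sum_nonneg; intro a _
      exact mul_nonneg (mul_nonneg (ih.1 s) ((hπ s).1 a)) ((hP s a).1 s')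
    · show ∑ s' : S, ∑ s : S, ∑ a : A, stateDist P π ρ0 t s * π s a * P s a s' = 1
      calc ∑ s' : S, ∑ s : S, ∑ a : A, stateDist P π ρ0 t s * π s a * P s a s'
          = ∑ s : S, ∑ a : A, ∑ s' : S, stateDist P π ρ0 t s * π s a * P s a s' := by
            rw [Finset.sum_comm]
            refine Finset.sum_congr rfl fun s _ => ?_
            rw [Finset.sum_comm]
        _ = ∑ s : S, ∑ a : A, stateDist P π ρ0 t s * π s a := by
            refine Finset.sum_congr rfl fun s _ => Finset.sum_congr rfl fun a _ => ?_
            rw [← Finset.mul_sum, (hP s a).2, mul_one]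
        _ = ∑ s : S, stateDist P π ρ0 t s := by
            refine Finset.sum_congr rfl fun s _ => ?_
            rw [← Finset.mul_sum, (hπ s).2, mul_one]
        _ = 1 := ih.2

lemma stateDist_tv_bound {S A : Type*} [Fintype S] [Fintype A]
    (P : S → A → S → ℝ) (hP : IsKernel P)
    (ρ0 : S → ℝ) (hρ0 : IsDist ρ0)
    (π π' : S → A → ℝ) (hπ : IsPolicy π) (hπ' : IsPolicy π')
    (ε : ℝ)
    (hε : ∀ s, (1 / 2) * ∑ a : A, |π' s a - π s a| ≤ ε) :
    ∀ t : ℕ, ∑ s : S, |stateDist P π' ρ0 t s - stateDist P π ρ0 t s| ≤ 2 * ε * t := by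
  intro t
  induction t with
  | zero => simp [stateDist]
  | succ t ih =>
    have hsum' := (stateDist_isDist P hP ρ0 hρ0 π' hπ' t).2
    have hpos' := (stateDist_isDist P hP ρ0 hρ0 π' hπ' t).1
    calc ∑ s' : S, |stateDist P π' ρ0 (t+1) s' - stateDist P π ρ0 (t+1) s'|
        = ∑ s' : S, |∑ s : S, ∑ a : A,
            (stateDist P π' ρ0 t s * π' s a - stateDist P π ρ0 t s * π s a) * P s a s'| := by
          refine Finset.sum_congr rfl fun s' _ => ?_
          congr 1
          show (∑ s : S, ∑ a : A, stateDist P π' ρ0 t s * π' s a * P s a s')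
              - (∑ s : S, ∑ a : A, stateDist P π ρ0 t s * π s a * P s a s') = _
          rw [← Finset.sum_sub_distrib]
          refine Finset.sum_congr rfl fun s _ => ?_
          rw [← Finset.sum_sub_distrib]
          refine Finset.sum_congr rfl fun a _ => ?_
          ring
      _ ≤ ∑ s' : S, ∑ s : S, ∑ a : A,
            |stateDist P π' ρ0 t s * π' s a - stateDist P π ρ0 t s * π s a| * P s a s' := by
          refine Finset.sum_le_sum fun s' _ => ?_
          refine (Finset.abs_sum_le_sum_abs _ _).trans ?_
          refine Finset.sum_le_sum fun s _ => ?_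
          refine (Finset.abs_sum_le_sum_abs _ _).trans ?_
          refine Finset.sum_le_sum fun a _ => ?_
          rw [abs_mul, abs_of_nonneg ((hP s a).1 s')]
      _ = ∑ s : S, ∑ a : A,
            |stateDist P π' ρ0 t s * π' s a - stateDist P π ρ0 t s * π s a| := by
          rw [Finset.sum_comm]
          refine Finset.sum_congr rfl fun s _ => ?_
          rw [Finset.sum_comm]
          refine Finset.sum_congr rfl fun a _ => ?_
          rw [← Finset.mul_sum, (hP s a).2, mul_one]
      _ ≤ ∑ s : S, ∑ a : A,
            (stateDist P π' ρ0 t s * |π' s a - π s a|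
              + |stateDist P π' ρ0 t s - stateDist P π ρ0 t s| * π s a) := by
          refine Finset.sum_le_sum fun s _ => Finset.sum_le_sum fun a _ => ?_
          have : stateDist P π' ρ0 t s * π' s a - stateDist P π ρ0 t s * π s a
              = stateDist P π' ρ0 t s * (π' s a - π s a)
                + (stateDist P π' ρ0 t s - stateDist P π ρ0 t s) * π s a := by ring
          rw [this]
          refine (abs_add_le _ _).trans ?_
          rw [abs_mul, abs_mul, abs_of_nonneg (hpos' s), abs_of_nonneg ((hπ s).1 a)]
      _ = ∑ s : S, (stateDist P π' ρ0 t s * ∑ a : A, |π' s a - π s a|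
            + |stateDist P π' ρ0 t s - stateDist P π ρ0 t s|) := by
          refine Finset.sum_congr rfl fun s _ => ?_
          rw [Finset.sum_add_distrib, ← Finset.mul_sum, ← Finset.mul_sum, (hπ s).2, mul_one]
      _ ≤ ∑ s : S, (stateDist P π' ρ0 t s * (2 * ε)
            + |stateDist P π' ρ0 t s - stateDist P π ρ0 t s|) := by
          refine Finset.sum_le_sum fun s _ => ?_
          have h2 : ∑ a : A, |π' s a - π s a| ≤ 2 * ε := by linarith [hε s]
          exact add_le_add_left (mul_le_mul_of_nonneg_left h2 (hpos' s)) _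
      _ = 2 * ε + ∑ s : S, |stateDist P π' ρ0 t s - stateDist P π ρ0 t s| := by
          rw [Finset.sum_add_distrib, ← Finset.sum_mul, hsum', one_mul]
      _ ≤ 2 * ε + 2 * ε * t := add_le_add_right ih _
      _ = 2 * ε * (t + 1 : ℕ) := by push_cast; ring

/-- **Lemma (closeness of expectations under the state marginals).**
If for every state `s` the total variation distance between the action
distributions `π'(·|s)` and `π(·|s)` is at most `ε`, then for every (bounded)
function `f : S → ℝ` and every time step `t`,
`E_{s ~ p_{π'}(s_t)}[f(s)] ≥ E_{s ~ p_π(s_t)}[f(s)] − 2εt·max_{s}|f(s)|`. -/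
theorem state_marginal_expectation_bound
    {S A : Type*} [Fintype S] [Fintype A] [Nonempty S] [Nonempty A]
    (P : S → A → S → ℝ) (hP : IsKernel P)
    (ρ0 : S → ℝ) (hρ0 : IsDist ρ0)
    (π π' : S → A → ℝ) (hπ : IsPolicy π) (hπ' : IsPolicy π')
    (ε : ℝ)
    (hε : ∀ s, (1 / 2) * ∑ a : A, |π' s a - π s a| ≤ ε)
    (f : S → ℝ) :
    ∀ t : ℕ,
      (∑ s : S, stateDist P π ρ0 t s * f s) - 2 * ε * t * (⨆ s : S, |f s|) ≤
        ∑ s : S, stateDist P π' ρ0 t s * f s := by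
  intro t
  set M := ⨆ s : S, |f s| with hM
  have hMb : ∀ s, |f s| ≤ M := fun s =>
    le_ciSup (f := fun s : S => |f s|) (Set.Finite.bddAbove (Set.finite_range _)) s
  have hM0 : 0 ≤ M := le_trans (abs_nonneg _) (hMb (Classical.arbitrary S))
  have htv := stateDist_tv_bound P hP ρ0 hρ0 π π' hπ hπ' ε hε t
  have key : (∑ s, stateDist P π ρ0 t s * f s) - (∑ s, stateDist P π' ρ0 t s * f s)
      ≤ 2 * ε * t * M := by
    rw [← Finset.sum_sub_distrib]
    calc ∑ s, (stateDist P π ρ0 t s * f s - stateDist P π' ρ0 t s * f s)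
        ≤ ∑ s, |stateDist P π ρ0 t s - stateDist P π' ρ0 t s| * M := by
          refine Finset.sum_le_sum fun s _ => ?_
          have h1 : stateDist P π ρ0 t s * f s - stateDist P π' ρ0 t s * f s
            = (stateDist P π ρ0 t s - stateDist P π' ρ0 t s) * f s := by ring
          rw [h1]
          calc _ ≤ |(stateDist P π ρ0 t s - stateDist P π' ρ0 t s) * f s| := le_abs_self _
            _ = |stateDist P π ρ0 t s - stateDist P π' ρ0 t s| * |f s| := abs_mul _ _
            _ ≤ _ := mul_le_mul_of_nonneg_left (hMb s) (abs_nonneg _)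
      _ = (∑ s, |stateDist P π' ρ0 t s - stateDist P π ρ0 t s|) * M := by
          rw [Finset.sum_mul]
          exact Finset.sum_congr rfl fun s _ => by rw [abs_sub_comm]
      _ ≤ 2 * ε * t * M := mul_le_mul_of_nonneg_right htv hM0
  linarith

end
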